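/- (Theorem 1, Part A (iii)) There exist δ > 0 and C > 0 such that for every Δ ∈ (−δ, 0): the unique fixed point β̂_Δ of ψ̃_Δ lies in the open interval (βlo, βhi), is self-confirming — that is, Δ + R(h(β̂_Δ), β̂_Δ) − R(h(β̂_Δ), β*) = 0 — and satisfies |β̂_Δ − β*| ≤ C·|Δ|. -/

import Mathlib

open Set

theorem stmt_2
    (βlo βstar βhi : ℝ)
    (hlo : 0 < βlo) (hls : βlo < βstar) (hsh : βstar < βhi)
    (R : ℝ → ℝ → ℝ)
    (hRcont : ContinuousOn (fun p : ℝ × ℝ => R p.1 p.2) (Icc (0:ℝ) 1 ×ˢ Ici (0:ℝ)))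
    (hR0 : ∀ h ∈ Icc (0:ℝ) 1, R h 0 = 0)
    (hR0' : ∀ β ∈ Ici (0:ℝ), R 0 β = 0)
    (hRβ : ∀ h ∈ Ioc (0:ℝ) 1, StrictMonoOn (fun β => R h β) (Ici 0))
    (hRh : ∀ β > (0:ℝ), StrictMonoOn (fun h => R h β) (Icc 0 1))
    (hRid : ∀ h₁ h₂ β₁ β₂ : ℝ, 0 ≤ h₁ → h₁ < h₂ → h₂ ≤ 1 → 0 ≤ β₁ → β₁ < β₂ →
      R h₂ β₁ - R h₁ β₁ < R h₂ β₂ - R h₁ β₂)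
    -- R is continuously differentiable, with ∂R/∂β > 0 for h ∈ (0,1], β > 0
    (hRdiff : ContDiffOn ℝ 1 (fun p : ℝ × ℝ => R p.1 p.2) (Icc (0:ℝ) 1 ×ˢ Ici (0:ℝ)))
    (hRβderiv : ∀ h ∈ Ioc (0:ℝ) 1, ∀ β > (0:ℝ), ∃ d > (0:ℝ),
      HasDerivAt (fun β' => R h β') d β)
    (H : ℝ → ℝ)
    (hHcont : ContinuousOn H (Ici 0))
    (hHmono : StrictMonoOn H (Ici 0))
    (hH0 : H 0 = 0)
    (hHin : ∀ β > (0:ℝ), H β ∈ Ioo (0:ℝ) 1)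
    (ψ : ℝ → ℝ → ℝ)
    (hψ : ∀ Δ : ℝ, ∀ β ∈ Icc βlo βhi,
      ψ Δ β ∈ Icc βlo βhi ∧
      ∀ x ∈ Icc βlo βhi, x ≠ ψ Δ β →
        |Δ + R (H β) (ψ Δ β) - R (H β) βstar| < |Δ + R (H β) x - R (H β) βstar|) :
    ∃ δ > (0:ℝ), ∃ C > (0:ℝ), ∀ Δ ∈ Ioo (-δ) (0:ℝ),
      ∃ bhat ∈ Ioo βlo βhi, ψ Δ bhat = bhat ∧
        (∀ β' ∈ Icc βlo βhi, ψ Δ β' = β' → β' = bhat) ∧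
        Δ + R (H bhat) bhat - R (H bhat) βstar = 0 ∧
        |bhat - βstar| ≤ C * |Δ| := by
  have hstar0 : (0:ℝ) < βstar := hlo.trans hls
  have hhi0 : (0:ℝ) < βhi := hstar0.trans hsh
  have hsub : Icc βlo βhi ⊆ Ici (0:ℝ) := fun x hx => le_trans hlo.le hx.1
  have hHI : ∀ β ∈ Icc βlo βhi, H β ∈ Ioo (0:ℝ) 1 := fun β hβ => hHin β (lt_of_lt_of_le hlo hβ.1)
  have hsmem : βstar ∈ Icc βlo βhi := ⟨hls.le, hsh.le⟩
  have hh₀I : H βstar ∈ Ioo (0:ℝ) 1 := hHin βstar hstar0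
  have hHc : ContinuousOn H (Icc βlo βhi) := hHcont.mono hsub
  have hcomp : ∀ u : ℝ → ℝ, ContinuousOn u (Icc βlo βhi) →
      (∀ β ∈ Icc βlo βhi, 0 ≤ u β) →
      ContinuousOn (fun β => R (H β) (u β)) (Icc βlo βhi) := by
    intro u hu hu0
    refine hRcont.comp (hHc.prodMk hu) ?_
    intro β hβ
    exact ⟨⟨(hHI β hβ).1.le, (hHI β hβ).2.le⟩, hu0 β hβ⟩
  -- minimum of β ↦ R (H β) βhi - R (H β) βstar over the compact interval
  have hMc : ContinuousOn (fun β => R (H β) βhi - R (H β) βstar) (Icc βlo βhi) :=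
    (hcomp (fun _ => βhi) continuousOn_const (fun β _ => hhi0.le)).sub
      (hcomp (fun _ => βstar) continuousOn_const (fun β _ => hstar0.le))
  obtain ⟨β₀, hβ₀, hmin⟩ := isCompact_Icc.exists_isMinOn ⟨βstar, hsmem⟩ hMc
  have hδ₁min : ∀ β ∈ Icc βlo βhi,
      R (H β₀) βhi - R (H β₀) βstar ≤ R (H β) βhi - R (H β) βstar :=
    fun β hβ => hmin hβ
  have hδ₁pos : 0 < R (H β₀) βhi - R (H β₀) βstar := by
    have h := hRβ (H β₀) ⟨(hHI β₀ hβ₀).1, (hHI β₀ hβ₀).2.le⟩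
      (mem_Ici.mpr hstar0.le) (mem_Ici.mpr hhi0.le) hsh
    exact sub_pos.mpr h
  set δ₁ := R (H β₀) βhi - R (H β₀) βstar with hδ₁def
  -- positive derivative at βstar for H βstar
  obtain ⟨d, hd, hder⟩ := hRβderiv (H βstar) ⟨hh₀I.1, hh₀I.2.le⟩ βstar hstar0
  rw [hasDerivAt_iff_tendsto_slope] at hder
  have hev : ∀ᶠ y in nhdsWithin βstar {βstar}ᶜ,
      d/2 < slope (fun β' => R (H βstar) β') βstar y :=
    hder.eventually (eventually_gt_nhds (by linarith))
  obtain ⟨ε, hε, hball⟩ := Metric.mem_nhdsWithin_iff.mp hev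
  have hmpos : 0 < R (H βstar) (βstar + ε/2) - R (H βstar) βstar := by
    have h : R (H βstar) βstar < R (H βstar) (βstar + ε/2) :=
      hRβ (H βstar) ⟨hh₀I.1, hh₀I.2.le⟩ (mem_Ici.mpr hstar0.le)
        (mem_Ici.mpr (by linarith)) (by linarith)
    exact sub_pos.mpr h
  set m := R (H βstar) (βstar + ε/2) - R (H βstar) βstar with hmdef
  refine ⟨min δ₁ m, lt_min hδ₁pos hmpos, 2/d, by positivity, ?_⟩
  intro Δ hΔ
  have hΔneg : Δ < 0 := hΔ.2
  have hΔlow : -(min δ₁ m) < Δ := hΔ.1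
  have hΔlow1 : -δ₁ ≤ Δ := le_trans (neg_le_neg (min_le_left δ₁ m)) hΔlow.le
  have habsΔ : |Δ| < min δ₁ m := by rw [abs_of_neg hΔneg]; linarith
  have haux1 : min δ₁ m ≤ δ₁ := min_le_left _ _
  have haux2 : min δ₁ m ≤ m := min_le_right _ _
  -- strict single-crossing comparisons
  have hkey2 : ∀ a b : ℝ, βlo ≤ a → a < b → βstar < b →
      R (H a) b - R (H a) βstar < R (H b) b - R (H b) βstar := by
    intro a b ha hab hsb
    have ha0 : 0 < a := hlo.trans_le ha
    have hb0 : 0 < b := ha0.trans hab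
    have hH : H a < H b := hHmono (mem_Ici.mpr ha0.le) (mem_Ici.mpr hb0.le) hab
    have h1 := hRid (H a) (H b) βstar b (hHin a ha0).1.le hH (hHin b hb0).2.le hstar0.le hsb
    linarith
  have hdiag : ∀ a b : ℝ, βstar < a → a < b →
      R (H a) a - R (H a) βstar < R (H b) b - R (H b) βstar := by
    intro a b hsa hab
    have ha0 : 0 < a := hstar0.trans hsa
    have hb0 : 0 < b := ha0.trans hab
    have h2 : R (H a) a < R (H a) b :=
      hRβ (H a) ⟨(hHin a ha0).1, (hHin a ha0).2.le⟩ (mem_Ici.mpr ha0.le) (mem_Ici.mpr hb0.le) hab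
    have h3 := hkey2 a b (hls.le.trans hsa.le) hab (hsa.trans hab)
    linarith
  -- IVT for existence of bhat
  have hgc : ContinuousOn (fun β => Δ + R (H β) β - R (H β) βstar) (Icc βlo βhi) := by
    have h1 := hcomp (fun x => x) continuousOn_id (fun β hβ => hsub hβ)
    have h2 := hcomp (fun _ => βstar) continuousOn_const (fun β _ => hstar0.le)
    exact (continuousOn_const.add h1).sub h2
  have hghi : 0 < Δ + R (H βhi) βhi - R (H βhi) βstar := by
    have h := hδ₁min βhi ⟨(hls.trans hsh).le, le_rfl⟩
    linarith
  obtain ⟨bhat, hbmem, hgb⟩ :=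
    intermediate_value_Icc hsh.le (hgc.mono (Icc_subset_Icc hls.le le_rfl))
      (⟨by show Δ + R (H βstar) βstar - R (H βstar) βstar ≤ 0; linarith,
        by show (0:ℝ) ≤ Δ + R (H βhi) βhi - R (H βhi) βstar; linarith⟩ :
        (0:ℝ) ∈ Icc (Δ + R (H βstar) βstar - R (H βstar) βstar)
          (Δ + R (H βhi) βhi - R (H βhi) βstar))
  have hgb' : Δ + R (H bhat) bhat - R (H bhat) βstar = 0 := hgb
  have hbgt : βstar < bhat := by
    rcases lt_or_eq_of_le hbmem.1 with h | h
    · exact h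
    · exfalso; rw [← h] at hgb'; nlinarith [hgb']
  have hblt : bhat < βhi := by
    rcases lt_or_eq_of_le hbmem.2 with h | h
    · exact h
    · exfalso; rw [h] at hgb'; linarith
  have hbIcc : bhat ∈ Icc βlo βhi := ⟨(hls.trans hbgt).le, hblt.le⟩
  -- bhat is a fixed point of ψ Δ
  have hfix : ψ Δ bhat = bhat := by
    by_contra hne
    have h1 := (hψ Δ bhat hbIcc).2 bhat hbIcc (Ne.symm hne)
    rw [hgb'] at h1
    simp only [abs_zero] at h1
    exact absurd h1 (not_lt.mpr (abs_nonneg _))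
  -- uniqueness
  have huniq : ∀ β' ∈ Icc βlo βhi, ψ Δ β' = β' → β' = bhat := by
    intro β' hβ' hfix'
    have hβ'0 : 0 < β' := hlo.trans_le hβ'.1
    have hφc : ContinuousOn (fun x => Δ + R (H β') x - R (H β') βstar) (Icc βlo βhi) := by
      have h1 : ContinuousOn (fun x => R (H β') x) (Icc βlo βhi) := by
        refine hRcont.comp (continuousOn_const.prodMk continuousOn_id) ?_
        intro x hx
        exact ⟨⟨(hHI β' hβ').1.le, (hHI β' hβ').2.le⟩, hsub hx⟩
      exact (continuousOn_const.add h1).sub continuousOn_const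
    have hφlo : Δ + R (H β') βlo - R (H β') βstar < 0 := by
      have := hRβ (H β') ⟨(hHI β' hβ').1, (hHI β' hβ').2.le⟩
        (mem_Ici.mpr hlo.le) (mem_Ici.mpr hstar0.le) hls
      linarith
    have hφhi : 0 ≤ Δ + R (H β') βhi - R (H β') βstar := by
      have h := hδ₁min β' hβ'
      linarith
    obtain ⟨x₀, hx₀mem, hx₀⟩ :=
      intermediate_value_Icc (hls.le.trans hsh.le) hφc
        (⟨hφlo.le, hφhi⟩ : (0:ℝ) ∈ Icc (Δ + R (H β') βlo - R (H β') βstar)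
          (Δ + R (H β') βhi - R (H β') βstar))
    have hx₀' : Δ + R (H β') x₀ - R (H β') βstar = 0 := hx₀
    have hg' : Δ + R (H β') β' - R (H β') βstar = 0 := by
      by_contra hne
      have hx0ne : x₀ ≠ β' := by
        intro h; rw [h] at hx₀'; exact hne hx₀'
      have h1 := (hψ Δ β' hβ').2 x₀ hx₀mem (by rw [hfix']; exact hx0ne)
      rw [hfix', hx₀'] at h1
      simp only [abs_zero] at h1
      exact absurd h1 (not_lt.mpr (abs_nonneg _))
    have hsβ' : βstar < β' := by
      rcases lt_trichotomy β' βstar with h | h | h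
      · exfalso
        have := hRβ (H β') ⟨(hHI β' hβ').1, (hHI β' hβ').2.le⟩
          (mem_Ici.mpr hβ'0.le) (mem_Ici.mpr hstar0.le) h
        linarith
      · exfalso; rw [h] at hg'; nlinarith [hg']
      · exact h
    rcases lt_trichotomy β' bhat with h | h | h
    · exfalso; have := hdiag β' bhat hsβ' h; linarith
    · exact h
    · exfalso; have := hdiag bhat β' hbgt h; linarith
  -- Lipschitz bound
  have hDabs : |Δ| = R (H bhat) bhat - R (H bhat) βstar := by
    rw [abs_of_neg hΔneg]; linarith
  have hlt2 : R (H βstar) bhat - R (H βstar) βstar < |Δ| := by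
    rw [hDabs]; exact hkey2 βstar bhat hls.le hbgt hbgt
  have hblts : bhat < βstar + ε/2 := by
    by_contra hcon
    push_neg at hcon
    have hmono' : R (H βstar) (βstar + ε/2) ≤ R (H βstar) bhat := by
      rcases eq_or_lt_of_le hcon with h | h
      · rw [h]
      · exact (hRβ (H βstar) ⟨hh₀I.1, hh₀I.2.le⟩
          (show βstar + ε/2 ∈ Ici (0:ℝ) from mem_Ici.mpr (by linarith))
          (mem_Ici.mpr (hstar0.trans hbgt).le) h).le
    have h5 : min δ₁ m ≤ m := min_le_right _ _
    have h6 : m ≤ R (H βstar) bhat - R (H βstar) βstar := by rw [hmdef]; linarith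
    linarith
  have hslope : d/2 < slope (fun β' => R (H βstar) β') βstar bhat := by
    apply hball
    constructor
    · rw [Metric.mem_ball, Real.dist_eq, abs_of_pos (sub_pos.mpr hbgt)]
      linarith
    · exact fun h => hbgt.ne' h
  have hpos : 0 < bhat - βstar := sub_pos.mpr hbgt
  have hsl : slope (fun β' => R (H βstar) β') βstar bhat
      = (R (H βstar) bhat - R (H βstar) βstar) / (bhat - βstar) := slope_def_field _ _ _
  rw [hsl] at hslope
  have hineq : d/2 * (bhat - βstar) < R (H βstar) bhat - R (H βstar) βstar :=
    (lt_div_iff₀ hpos).mp hslope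
  have hfin : |bhat - βstar| ≤ 2/d * |Δ| := by
    rw [abs_of_pos hpos]
    rw [div_mul_eq_mul_div, le_div_iff₀ hd]
    nlinarith
  exact ⟨bhat, ⟨hls.trans hbgt, hblt⟩, hfix, huniq, hgb', hfin⟩
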